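/- For every positive integer m, every real number a, and every real number x, there exists r > 0 such that for all real z with |z| < r, the series Σ_{n=0}^{∞} F̃_{m,a}(n;x) · z^n/n! converges and its sum equals the integral ∫_{0}^{∞} exp(-a·z - λ·(1 - (x/m)·(e^{m z} - 1))) dλ. -/

import Mathlib

open Finset MeasureTheory

/-- Noncentral Whitney numbers of the second kind:
`W̃_{m,a}(n,k) = (1/(m^k k!)) Σ_{j=0}^{k} (-1)^{k-j} C(k,j) (m j - a)^n`. -/
noncomputable def ncWhitney (m : ℕ) (a : ℝ) (n k : ℕ) : ℝ :=
  (1 / ((m : ℝ) ^ k * (Nat.factorial k : ℝ))) *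
    ∑ j ∈ Finset.range (k + 1),
      (-1 : ℝ) ^ (k - j) * (Nat.choose k j : ℝ) * ((m : ℝ) * (j : ℝ) - a) ^ n

/-- Noncentral Tanny-Dowling polynomials:
`F̃_{m,a}(n;x) = Σ_{k=0}^{n} k! W̃_{m,a}(n,k) x^k`. -/
noncomputable def ncTannyDowling (m : ℕ) (a : ℝ) (n : ℕ) (x : ℝ) : ℝ :=
  ∑ k ∈ Finset.range (n + 1), (Nat.factorial k : ℝ) * ncWhitney m a n k * x ^ k

/-- Noncentral Dowling polynomials:
`D̃_{m,a}(n;x) = Σ_{k=0}^{n} W̃_{m,a}(n,k) x^k`. -/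
noncomputable def ncDowling (m : ℕ) (a : ℝ) (n : ℕ) (x : ℝ) : ℝ :=
  ∑ k ∈ Finset.range (n + 1), ncWhitney m a n k * x ^ k

section aux
open Polynomial

lemma neg_one_pow_sub_eq {j k : ℕ} (h : j ≤ k) : (-1:ℝ)^(k-j) = (-1:ℝ)^(k+j) := by
  rw [show k + j = (k-j) + 2*j by omega, pow_add, pow_mul]
  norm_num

lemma finite_diff_vanish' : ∀ (k : ℕ) (P : Polynomial ℝ), P.natDegree < k →
    ∑ j ∈ Finset.range (k + 1), (-1 : ℝ) ^ j * (Nat.choose k j : ℝ) * P.eval (j : ℝ) = 0 := by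
  intro k
  induction k with
  | zero => intro P hP; exact absurd hP (Nat.not_lt_zero _)
  | succ k ih =>
    intro P hP
    set Q : Polynomial ℝ := P - P.comp (X + C 1) with hQ
    have hevalQ : ∀ j : ℝ, Q.eval j = P.eval j - P.eval (j + 1) := by
      intro j; simp [hQ, eval_comp]
    have key : ∑ j ∈ Finset.range (k + 2), (-1 : ℝ) ^ j * (Nat.choose (k+1) j : ℝ) * P.eval (j : ℝ)
        = ∑ j ∈ Finset.range (k + 1), (-1 : ℝ) ^ j * (Nat.choose k j : ℝ) * Q.eval (j : ℝ) := by
      have split : ∀ j ∈ Finset.range (k+2),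
          (-1 : ℝ) ^ j * (Nat.choose (k+1) j : ℝ) * P.eval (j : ℝ)
          = (-1 : ℝ) ^ j * (Nat.choose k j : ℝ) * P.eval (j : ℝ)
            + (-1 : ℝ) ^ j * ((Nat.choose (k+1) j : ℝ) - (Nat.choose k j : ℝ)) * P.eval (j : ℝ) := by
        intro j _; ring
      rw [Finset.sum_congr rfl split, Finset.sum_add_distrib]
      have hA : ∑ j ∈ Finset.range (k + 2), (-1 : ℝ) ^ j * (Nat.choose k j : ℝ) * P.eval (j : ℝ)
          = ∑ j ∈ Finset.range (k + 1), (-1 : ℝ) ^ j * (Nat.choose k j : ℝ) * P.eval (j : ℝ) := by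
        rw [Finset.sum_range_succ, Nat.choose_succ_self]
        simp
      have hB : ∑ j ∈ Finset.range (k + 2),
            (-1 : ℝ) ^ j * ((Nat.choose (k+1) j : ℝ) - (Nat.choose k j : ℝ)) * P.eval (j : ℝ)
          = - ∑ i ∈ Finset.range (k + 1), (-1 : ℝ) ^ i * (Nat.choose k i : ℝ) * P.eval ((i : ℝ) + 1) := by
        rw [Finset.sum_range_succ' ]
        have hterm : ∀ i ∈ Finset.range (k+1),
            (-1 : ℝ) ^ (i+1) * ((Nat.choose (k+1) (i+1) : ℝ) - (Nat.choose k (i+1) : ℝ)) * P.eval ((i+1 : ℕ) : ℝ)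
            = -((-1 : ℝ) ^ i * (Nat.choose k i : ℝ) * P.eval ((i : ℝ) + 1)) := by
          intro i _
          rw [Nat.choose_succ_succ]
          push_cast
          ring
        rw [Finset.sum_congr rfl hterm]
        simp [Finset.sum_neg_distrib]
      rw [hA, hB, ← sub_eq_add_neg, ← Finset.sum_sub_distrib]
      apply Finset.sum_congr rfl
      intro j _
      rw [hevalQ]
      ring
    rw [key]
    by_cases hQ0 : Q = 0
    · simp [hQ0]
    · apply ih
      have hP0 : P ≠ 0 := by rintro rfl; simp [hQ] at hQ0
      have hdP : P.natDegree ≠ 0 := by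
        intro h
        obtain ⟨c, rfl⟩ := Polynomial.natDegree_eq_zero.mp h
        simp [hQ] at hQ0
      have hX : (X + C (1:ℝ)).natDegree = 1 := by
        simpa using Polynomial.natDegree_X_add_C (1:ℝ)
      have hcomp_lc : (P.comp (X + C 1)).leadingCoeff = P.leadingCoeff := by
        rw [Polynomial.leadingCoeff_comp (by rw [hX]; norm_num)]
        rw [(Polynomial.monic_X_add_C (1:ℝ)).leadingCoeff, one_pow, mul_one]
      have hcomp_ne : P.comp (X + C 1) ≠ 0 := by
        intro h
        rw [h] at hcomp_lc
        exact hP0 (Polynomial.leadingCoeff_eq_zero.mp hcomp_lc.symm)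
      have hdeg : P.degree = (P.comp (X + C 1)).degree := by
        rw [Polynomial.degree_eq_natDegree hcomp_ne, Polynomial.degree_eq_natDegree hP0,
          Polynomial.natDegree_comp, hX, mul_one]
      have := Polynomial.degree_sub_lt hdeg hP0 hcomp_lc.symm
      have h2 := Polynomial.natDegree_lt_natDegree hQ0 this
      omega

lemma finite_diff_vanish (k : ℕ) (P : Polynomial ℝ) (hP : P.natDegree < k) :
    ∑ j ∈ Finset.range (k + 1), (-1 : ℝ) ^ (k - j) * (Nat.choose k j : ℝ) * P.eval (j : ℝ) = 0 := by
  have h := finite_diff_vanish' k P hP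
  have : ∑ j ∈ Finset.range (k + 1), (-1 : ℝ) ^ (k - j) * (Nat.choose k j : ℝ) * P.eval (j : ℝ)
      = (-1 : ℝ)^k * ∑ j ∈ Finset.range (k + 1), (-1 : ℝ) ^ j * (Nat.choose k j : ℝ) * P.eval (j : ℝ) := by
    rw [Finset.mul_sum]
    apply Finset.sum_congr rfl
    intro j hj
    simp only [Finset.mem_range] at hj
    have hjk : j ≤ k := by omega
    have hpow : (-1 : ℝ) ^ (k - j) = (-1:ℝ)^k * (-1:ℝ)^j := by
      rw [← pow_add, show k + j = (k - j) + 2*j by omega, pow_add, pow_mul]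
      norm_num
    rw [hpow]
    ring
  rw [this, h, mul_zero]

lemma ncWhitney_eq_zero (m : ℕ) (a : ℝ) {n k : ℕ} (h : n < k) : ncWhitney m a n k = 0 := by
  have hdeg : ((C (m:ℝ) * X - C a) ^ n).natDegree < k := by
    refine lt_of_le_of_lt (le_trans Polynomial.natDegree_pow_le ?_) h
    have h1 : (C (m:ℝ) * X - C a).natDegree ≤ 1 := by
      refine le_trans (Polynomial.natDegree_sub_le _ _) ?_
      simp only [max_le_iff]
      constructor
      · exact le_trans (Polynomial.natDegree_C_mul_le _ _) (by simp)
      · simp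
    calc n * (C (m:ℝ) * X - C a).natDegree ≤ n * 1 := Nat.mul_le_mul_left n h1
      _ = n := mul_one n
  have := finite_diff_vanish k ((C (m:ℝ) * X - C a) ^ n) hdeg
  unfold ncWhitney
  rw [show ∑ j ∈ Finset.range (k + 1),
      (-1 : ℝ) ^ (k - j) * (Nat.choose k j : ℝ) * ((m : ℝ) * (j : ℝ) - a) ^ n
      = ∑ j ∈ Finset.range (k + 1),
      (-1 : ℝ) ^ (k - j) * (Nat.choose k j : ℝ) * Polynomial.eval (j:ℝ) ((C (m:ℝ) * X - C a) ^ n) by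
    refine Finset.sum_congr rfl fun j _ => ?_; simp]
  rw [this, mul_zero]

end aux

set_option maxHeartbeats 1000000 in
theorem ncTannyDowling_egf_integral (m : ℕ) (hm : 0 < m) (a : ℝ) (x : ℝ) :
    ∃ r > (0 : ℝ), ∀ z : ℝ, |z| < r →
      HasSum (fun n : ℕ => ncTannyDowling m a n x * z ^ n / (Nat.factorial n : ℝ))
        (∫ l in Set.Ioi (0 : ℝ),
          Real.exp (-a * z - l * (1 - (x / (m : ℝ)) * (Real.exp ((m : ℝ) * z) - 1)))) := by
  set M : ℝ := (m : ℝ) with hMdef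
  have hM : 0 < M := by rw [hMdef]; exact_mod_cast hm
  set Cx : ℝ := max 1 (|x| / M) with hCx
  have hCx1 : (1:ℝ) ≤ Cx := le_max_left _ _
  set K : ℝ := 2 * Cx * (M + |a|) with hK
  have hCx0 : (0:ℝ) < Cx := lt_of_lt_of_le one_pos hCx1
  have hKpos : 0 < K := by rw [hK]; nlinarith [abs_nonneg a]
  set KE : ℝ := K * Real.exp 1 with hKE
  have hKEpos : 0 < KE := by positivity
  refine ⟨min (1/M) (min (1/(2*|x|+1)) (1/(KE+1))), by positivity, ?_⟩
  intro z hz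
  obtain ⟨hz1, hz2, hz3⟩ : |z| < 1/M ∧ |z| < 1/(2*|x|+1) ∧ |z| < 1/(KE+1) := by
    refine ⟨lt_of_lt_of_le hz (min_le_left _ _), ?_, ?_⟩
    · exact lt_of_lt_of_le hz (le_trans (min_le_right _ _) (min_le_left _ _))
    · exact lt_of_lt_of_le hz (le_trans (min_le_right _ _) (min_le_right _ _))
  set E : ℝ := Real.exp (M * z) with hE
  set c : ℝ := x / M * (E - 1) with hc
  -- |c| < 1
  have habsz : 0 ≤ |z| := abs_nonneg z
  have hc1 : |c| < 1 := by
    have hmz : |M * z| ≤ 1 := by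
      rw [abs_mul, abs_of_pos hM]
      calc M * |z| ≤ M * (1/M) := by nlinarith
        _ = 1 := by field_simp
    have h1 : |E - 1| ≤ 2 * |M * z| := Real.abs_exp_sub_one_le hmz
    have : |c| ≤ 2 * |x| * |z| := by
      rw [hc, abs_mul, abs_div, abs_of_pos hM]
      calc |x| / M * |E - 1| ≤ |x| / M * (2 * |M * z|) := by
            apply mul_le_mul_of_nonneg_left h1 (by positivity)
        _ = 2 * |x| * |z| := by rw [abs_mul, abs_of_pos hM]; field_simp
    calc |c| ≤ 2 * |x| * |z| := this
      _ < 1 := by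
          have h2 : 2 * |x| * |z| ≤ 2 * |x| * (1/(2*|x|+1)) := by
            apply mul_le_mul_of_nonneg_left hz2.le (by positivity)
          have h3 : 2 * |x| * (1/(2*|x|+1)) < 1 := by
            rw [mul_one_div, div_lt_one (by positivity)]
            linarith
          linarith
  have hbpos : 0 < 1 - c := by
    have := (abs_lt.mp hc1).2
    linarith
  -- geometric ratio for summability
  set w : ℝ := KE * |z| with hw
  have hw0 : 0 ≤ w := by positivity
  have hw1 : w < 1 := by
    calc w ≤ KE * (1/(KE+1)) := mul_le_mul_of_nonneg_left hz3.le hKEpos.le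
      _ < 1 := by rw [mul_one_div, div_lt_one (by positivity)]; linarith
  clear_value Cx K KE w
  -- the summand
  set term : ℕ → ℕ → ℝ :=
    fun k n => (Nat.factorial k : ℝ) * ncWhitney m a n k * x ^ k * z ^ n / (Nat.factorial n : ℝ)
    with hterm
  -- rewriting of term as a finite sum of exponential-series terms
  have hrw : ∀ k n, term k n = ∑ j ∈ Finset.range (k+1),
      (x ^ k / M ^ k * ((-1:ℝ)^(k-j) * (Nat.choose k j : ℝ)))
        * (((M * j - a) * z) ^ n / (Nat.factorial n : ℝ)) := by
    intro k n
    rw [hterm]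
    simp only [ncWhitney]
    rw [Finset.mul_sum, Finset.mul_sum, Finset.sum_mul, Finset.sum_mul, Finset.sum_div]
    refine Finset.sum_congr rfl fun j _ => ?_
    have hkfac : (Nat.factorial k : ℝ) ≠ 0 := by positivity
    have hnfac : (Nat.factorial n : ℝ) ≠ 0 := by positivity
    have hMk : M ^ k ≠ 0 := by positivity
    rw [mul_pow]
    field_simp
    ring
  -- exponential series
  have hexp : ∀ y : ℝ, HasSum (fun n : ℕ => y ^ n / (Nat.factorial n : ℝ)) (Real.exp y) := by
    intro y
    rw [Real.exp_eq_exp_ℝ]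
    exact NormedSpace.expSeries_div_hasSum_exp y
  -- fiberwise sum over n, for fixed k
  have h2 : ∀ k : ℕ, HasSum (fun n => term k n) (Real.exp (-(a*z)) * c ^ k) := by
    intro k
    have hsum : HasSum (fun n => ∑ j ∈ Finset.range (k+1),
        (x ^ k / M ^ k * ((-1:ℝ)^(k-j) * (Nat.choose k j : ℝ)))
          * (((M * j - a) * z) ^ n / (Nat.factorial n : ℝ)))
        (∑ j ∈ Finset.range (k+1),
        (x ^ k / M ^ k * ((-1:ℝ)^(k-j) * (Nat.choose k j : ℝ)))
          * Real.exp ((M * j - a) * z)) :=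
      hasSum_sum fun j _ => (hexp _).mul_left _
    have hval : (∑ j ∈ Finset.range (k+1),
        (x ^ k / M ^ k * ((-1:ℝ)^(k-j) * (Nat.choose k j : ℝ)))
          * Real.exp ((M * j - a) * z)) = Real.exp (-(a*z)) * c ^ k := by
      have hEj : ∀ j : ℕ, Real.exp ((M * j - a) * z) = E ^ j * Real.exp (-(a*z)) := by
        intro j
        rw [hE, ← Real.exp_nat_mul, ← Real.exp_add]
        congr 1
        push_cast
        ring
      calc (∑ j ∈ Finset.range (k+1),
          (x ^ k / M ^ k * ((-1:ℝ)^(k-j) * (Nat.choose k j : ℝ))) * Real.exp ((M * j - a) * z))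
          = Real.exp (-(a*z)) * ((x / M) ^ k *
              ∑ j ∈ Finset.range (k+1), (-1:ℝ)^(j+k) * E ^ j * 1 ^ (k-j) * (Nat.choose k j : ℝ)) := by
            rw [Finset.mul_sum, Finset.mul_sum]
            refine Finset.sum_congr rfl fun j hj => ?_
            rw [hEj j, neg_one_pow_sub_eq (by simpa [Nat.lt_succ_iff] using hj),
              show k + j = j + k by ring, div_pow]
            ring
        _ = Real.exp (-(a*z)) * ((x / M) ^ k * (E - 1) ^ k) := by rw [← sub_pow E 1 k]
        _ = Real.exp (-(a*z)) * c ^ k := by rw [hc, mul_pow]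
    rw [show (fun n => term k n) = fun n => ∑ j ∈ Finset.range (k+1),
      (x ^ k / M ^ k * ((-1:ℝ)^(k-j) * (Nat.choose k j : ℝ)))
        * (((M * j - a) * z) ^ n / (Nat.factorial n : ℝ)) from funext (hrw k), ← hval]
    exact hsum
  -- vanishing above the diagonal
  have hzero : ∀ k n : ℕ, n < k → term k n = 0 := by
    intro k n h
    rw [hterm]
    simp [ncWhitney_eq_zero m a h]
  -- per-term bound
  have hbound : ∀ k n : ℕ, k ≤ n → |term k n| ≤ Real.exp 1 * w ^ n := by
    intro k n hkn
    have hnfac : (0:ℝ) < (Nat.factorial n : ℝ) := by positivity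
    set R : ℝ := (M + |a|) * ((n:ℝ)+1) * |z| with hR
    have hR0 : 0 ≤ R := by positivity
    have hxM : (0:ℝ) ≤ |x| / M := by positivity
    have hper : ∀ j ∈ Finset.range (k+1),
        |(x ^ k / M ^ k * ((-1:ℝ)^(k-j) * (Nat.choose k j : ℝ)))
          * (((M * j - a) * z) ^ n / (Nat.factorial n : ℝ))|
        ≤ Cx ^ n * (Nat.choose k j : ℝ) * (R ^ n / (Nat.factorial n : ℝ)) := by
      intro j hj
      have hjk : j ≤ k := by simpa [Nat.lt_succ_iff] using hj
      have hjn : (j:ℝ) ≤ (n:ℝ) := by exact_mod_cast hjk.trans hkn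
      have heq : |(x ^ k / M ^ k * ((-1:ℝ)^(k-j) * (Nat.choose k j : ℝ)))
          * (((M * j - a) * z) ^ n / (Nat.factorial n : ℝ))|
          = (|x| / M) ^ k * (Nat.choose k j : ℝ)
            * (|(M * j - a) * z| ^ n / (Nat.factorial n : ℝ)) := by
        rw [abs_mul, abs_mul, abs_div, abs_pow, abs_pow, abs_of_pos hM, abs_mul, abs_pow,
          abs_neg, abs_one, one_pow, one_mul, abs_div, abs_pow, Nat.abs_cast, Nat.abs_cast,
          div_pow]
      rw [heq]
      have hxCx : |x| / M ≤ Cx := by rw [hCx]; exact le_max_right _ _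
      have h1 : (|x| / M) ^ k ≤ Cx ^ n :=
        le_trans (pow_le_pow_left₀ hxM hxCx k) (pow_le_pow_right₀ hCx1 hkn)
      have h2 : |(M * j - a) * z| ≤ R := by
        rw [abs_mul, hR]
        have : |M * j - a| ≤ (M + |a|) * ((n:ℝ)+1) := by
          calc |M * j - a| ≤ |M * j| + |a| := abs_sub _ _
            _ = M * j + |a| := by rw [abs_mul, abs_of_pos hM, Nat.abs_cast]
            _ ≤ (M + |a|) * ((n:ℝ)+1) := by nlinarith [abs_nonneg a, hM]
        exact mul_le_mul_of_nonneg_right this (abs_nonneg z)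
      have h3 : |(M * j - a) * z| ^ n ≤ R ^ n := pow_le_pow_left₀ (abs_nonneg _) h2 n
      have hA : (|x| / M) ^ k * (Nat.choose k j : ℝ) ≤ Cx ^ n * (Nat.choose k j : ℝ) :=
        mul_le_mul_of_nonneg_right h1 (by positivity)
      have hB : |(M * j - a) * z| ^ n / (Nat.factorial n : ℝ)
          ≤ R ^ n / (Nat.factorial n : ℝ) := by gcongr
      exact mul_le_mul hA hB (by positivity) (by positivity)
    calc |term k n|
        = |∑ j ∈ Finset.range (k+1),
            (x ^ k / M ^ k * ((-1:ℝ)^(k-j) * (Nat.choose k j : ℝ)))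
              * (((M * j - a) * z) ^ n / (Nat.factorial n : ℝ))| := by rw [hrw]
      _ ≤ ∑ j ∈ Finset.range (k+1),
            |(x ^ k / M ^ k * ((-1:ℝ)^(k-j) * (Nat.choose k j : ℝ)))
              * (((M * j - a) * z) ^ n / (Nat.factorial n : ℝ))| :=
          Finset.abs_sum_le_sum_abs _ _
      _ ≤ ∑ j ∈ Finset.range (k+1),
            Cx ^ n * (Nat.choose k j : ℝ) * (R ^ n / (Nat.factorial n : ℝ)) :=
          Finset.sum_le_sum hper
      _ = Cx ^ n * (2:ℝ) ^ k * (R ^ n / (Nat.factorial n : ℝ)) := by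
          rw [← Finset.sum_mul, ← Finset.mul_sum]
          norm_cast
          rw [Nat.sum_range_choose]
      _ ≤ Cx ^ n * (2:ℝ) ^ n * (R ^ n / (Nat.factorial n : ℝ)) := by
          have h2k : (2:ℝ) ^ k ≤ (2:ℝ) ^ n := pow_le_pow_right₀ (by norm_num) hkn
          exact mul_le_mul_of_nonneg_right
            (mul_le_mul_of_nonneg_left h2k (by positivity)) (by positivity)
      _ = (K * |z|) ^ n * (((n:ℝ)+1) ^ n / (Nat.factorial n : ℝ)) := by
          rw [hK, hR, mul_pow, mul_pow, mul_pow, mul_pow, mul_pow]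
          ring
      _ ≤ (K * |z|) ^ n * (Real.exp 1 * Real.exp 1 ^ n) := by
          have h4 : ((n:ℝ)+1) ^ n / (Nat.factorial n : ℝ) ≤ Real.exp ((n:ℝ)+1) :=
            le_hasSum (hexp ((n:ℝ)+1)) n (fun j _ => by positivity)
          have h5 : Real.exp ((n:ℝ)+1) = Real.exp 1 * Real.exp 1 ^ n := by
            rw [← Real.exp_nat_mul]
            rw [← Real.exp_add]
            congr 1
            push_cast
            ring
          refine mul_le_mul_of_nonneg_left ?_ (by positivity)
          rw [← h5]
          exact h4
      _ = Real.exp 1 * w ^ n := by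
          rw [hw, hKE, mul_pow, mul_pow]
          ring
  -- support of fibers
  have hfinsupp : ∀ n : ℕ, ∀ k ∉ Finset.range (n+1), term k n = 0 := by
    intro n k hk
    exact hzero k n (by simpa [Nat.lt_succ_iff] using hk)
  -- absolute summability on ℕ × ℕ (first coordinate n, second k)
  have hmaj : Summable (fun n : ℕ => ((n:ℝ)+1) * (Real.exp 1 * w ^ n)) := by
    have hwn : ‖w‖ < 1 := by rwa [Real.norm_eq_abs, abs_of_nonneg hw0]
    have h1 : Summable (fun n : ℕ => (n:ℝ) ^ 1 * w ^ n) :=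
      summable_pow_mul_geometric_of_norm_lt_one 1 hwn
    have h2 : Summable (fun n : ℕ => w ^ n) := summable_geometric_of_lt_one hw0 hw1
    have h3 := (h1.add h2).mul_left (Real.exp 1)
    refine h3.congr fun n => ?_
    ring
  have habs_sum : Summable (fun p : ℕ × ℕ => |term p.2 p.1|) := by
    rw [summable_prod_of_nonneg (fun p => abs_nonneg _)]
    constructor
    · intro n
      refine summable_of_ne_finset_zero (s := Finset.range (n+1)) fun k hk => ?_
      rw [hfinsupp n k hk, abs_zero]
    · refine Summable.of_nonneg_of_le (fun n => tsum_nonneg fun k => abs_nonneg _) ?_ hmaj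
      intro n
      rw [tsum_eq_sum (s := Finset.range (n+1)) (fun k hk => by rw [hfinsupp n k hk, abs_zero])]
      calc ∑ k ∈ Finset.range (n+1), |term k n|
          ≤ ∑ k ∈ Finset.range (n+1), Real.exp 1 * w ^ n :=
            Finset.sum_le_sum fun k hk => hbound k n (by simpa [Nat.lt_succ_iff] using hk)
        _ = ((n:ℝ)+1) * (Real.exp 1 * w ^ n) := by
            rw [Finset.sum_const, Finset.card_range, nsmul_eq_mul]
            push_cast
            ring
  have hsummable : Summable (fun p : ℕ × ℕ => term p.2 p.1) := habs_sum.of_abs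
  obtain ⟨T, hT⟩ := hsummable
  -- fiberwise over n gives the EGF partial sums
  have hfib_n : ∀ n : ℕ, HasSum (fun k => term k n)
      (ncTannyDowling m a n x * z ^ n / (Nat.factorial n : ℝ)) := by
    intro n
    have h1 : HasSum (fun k => term k n) (∑ k ∈ Finset.range (n+1), term k n) :=
      hasSum_sum_of_ne_finset_zero (hfinsupp n)
    have h2 : (∑ k ∈ Finset.range (n+1), term k n)
        = ncTannyDowling m a n x * z ^ n / (Nat.factorial n : ℝ) := by
      rw [ncTannyDowling, Finset.sum_mul, Finset.sum_div]
    rwa [h2] at h1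
  have hEGF : HasSum (fun n : ℕ => ncTannyDowling m a n x * z ^ n / (Nat.factorial n : ℝ)) T :=
    hT.prod_fiberwise hfib_n
  -- swap coordinates and compute T
  have hswap : HasSum (fun p : ℕ × ℕ => term p.1 p.2) T :=
    ((Equiv.prodComm ℕ ℕ).hasSum_iff (f := fun p : ℕ × ℕ => term p.2 p.1) (a := T)).mpr hT
  have hgeomsum : HasSum (fun k => Real.exp (-(a*z)) * c ^ k) T := hswap.prod_fiberwise h2
  have hTval : T = Real.exp (-(a*z)) * (1-c)⁻¹ :=
    hgeomsum.unique ((hasSum_geometric_of_abs_lt_one hc1).mul_left _)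
  -- the integral
  have hint : (∫ l in Set.Ioi (0:ℝ), Real.exp (-a*z - l*(1-c)))
      = Real.exp (-(a*z)) * (1-c)⁻¹ := by
    have h1 : ∀ l : ℝ, Real.exp (-a*z - l*(1-c))
        = Real.exp (-(a*z)) * Real.exp (-((1-c)*l)) := by
      intro l
      rw [← Real.exp_add]
      congr 1
      ring
    simp_rw [h1]
    rw [MeasureTheory.integral_const_mul]
    congr 1
    have h2 := integral_comp_mul_left_Ioi (fun y => Real.exp (-y)) 0 hbpos
    simp only [mul_zero, smul_eq_mul] at h2
    rw [h2, integral_exp_neg_Ioi]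
    simp
  rw [hint, ← hTval]
  exact hEGF
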